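/- Let Φ : N_{r,s}(U) → N_{r̃,s̃}(Ũ) be a Lie algebra isomorphism between pseudo H-type Lie algebras, written in block form Φ = (A, 0; B, C) relative to the decompositions U ⊕ ℝ^{r,s} and Ũ ⊕ ℝ^{r̃,s̃} (this form is forced since Φ maps center to center). Then A and C satisfy A^τ J̃_z A = J_{C^τ(z)} for all z ∈ ℝ^{r̃,s̃}, where A^τ and C^τ are adjoints with respect to the scalar products. Conversely, if bijective linear maps A, C satisfy this relation, then A ⊕ C is a Lie algebra isomorphism. -/

import Mathlib

/-- For a map `Φ = (A, 0; B, C)` between pseudo `H`-type algebras (block form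
forced by mapping center to center), `Φ` is a Lie algebra isomorphism, i.e.
`C [x,y] = [A x, A y]` for all `x, y`, if and only if `Aᵀ J̃_z A = J_{Cᵀ z}` for all `z`. -/
theorem pseudo_H_type_isomorphism_iff_intertwining
    {U W Z Z' : Type*}
    [AddCommGroup U] [Module ℝ U] [FiniteDimensional ℝ U]
    [AddCommGroup W] [Module ℝ W] [FiniteDimensional ℝ W]
    [AddCommGroup Z] [Module ℝ Z] [FiniteDimensional ℝ Z]
    [AddCommGroup Z'] [Module ℝ Z'] [FiniteDimensional ℝ Z']
    (BU : LinearMap.BilinForm ℝ U) (hBUnd : BU.Nondegenerate)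
    (hBUsymm : ∀ x y : U, BU x y = BU y x)
    (BW : LinearMap.BilinForm ℝ W) (hBWnd : BW.Nondegenerate)
    (hBWsymm : ∀ x y : W, BW x y = BW y x)
    (BZ : LinearMap.BilinForm ℝ Z) (hBZnd : BZ.Nondegenerate)
    (hBZsymm : ∀ a b : Z, BZ a b = BZ b a)
    (BZ' : LinearMap.BilinForm ℝ Z') (hBZ'nd : BZ'.Nondegenerate)
    (hBZ'symm : ∀ a b : Z', BZ' a b = BZ' b a)
    (J : Z →ₗ[ℝ] Module.End ℝ U) (J' : Z' →ₗ[ℝ] Module.End ℝ W)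
    (br : U →ₗ[ℝ] U →ₗ[ℝ] Z)
    (hbr : ∀ (z : Z) (x y : U), BU (J z x) y = BZ z (br x y))
    (br' : W →ₗ[ℝ] W →ₗ[ℝ] Z')
    (hbr' : ∀ (z : Z') (x y : W), BW (J' z x) y = BZ' z (br' x y))
    (A : U →ₗ[ℝ] W) (hA : Function.Bijective A)
    (C : Z →ₗ[ℝ] Z') (hC : Function.Bijective C)
    (Aτ : W →ₗ[ℝ] U) (hAτ : ∀ (x : U) (y : W), BW (A x) y = BU x (Aτ y))
    (Cτ : Z' →ₗ[ℝ] Z) (hCτ : ∀ (z : Z) (w : Z'), BZ' (C z) w = BZ z (Cτ w)) :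
    (∀ x y : U, C (br x y) = br' (A x) (A y)) ↔
      (∀ z : Z', (Aτ ∘ₗ (J' z : W →ₗ[ℝ] W) ∘ₗ A : U →ₗ[ℝ] U) = J (Cτ z)) := by

  have key1 : ∀ (z : Z') (x y : U),
      BU (Aτ (J' z (A x))) y = BZ' z (br' (A x) (A y)) := by
    intro z x y
    rw [hBUsymm, ← hAτ, hBWsymm, hbr']
  have key2 : ∀ (z : Z') (x y : U),
      BU (J (Cτ z) x) y = BZ' z (C (br x y)) := by
    intro z x y
    rw [hbr, hBZsymm, ← hCτ, hBZ'symm]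
  constructor
  · intro h z
    ext x
    have eq : ∀ y, BU (Aτ (J' z (A x)) - J (Cτ z) x) y = 0 := by
      intro y
      have e : BU (Aτ (J' z (A x))) y = BU (J (Cτ z) x) y := by
        rw [key1, key2, h]
      simp [map_sub, LinearMap.sub_apply, e]
    have := hBUnd.1 _ eq
    simpa [sub_eq_zero] using this
  · intro h x y
    have eq : ∀ n, BZ' (C (br x y) - br' (A x) (A y)) n = 0 := by
      intro n
      have e : BZ' n (C (br x y)) = BZ' n (br' (A x) (A y)) := by
        rw [← key2, ← key1]
        exact (congrArg (fun f : U →ₗ[ℝ] U => BU (f x) y) (h n)).symm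
      have e' : BZ' (C (br x y)) n = BZ' (br' (A x) (A y)) n := by
        rw [hBZ'symm, e, hBZ'symm]
      simp [map_sub, LinearMap.sub_apply, e']
    have := hBZ'nd.1 _ eq
    exact sub_eq_zero.mp this
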